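/- In the toric reflection group W(k,n,m), the elements (x₁x₂⋯xₙ)^m and (x₁x₂⋯x_m)^n are equal (indices of the xᵢ taken modulo n). -/
import Mathlib


/-- The word `x_i x_{i+1} ⋯ x_{i+l-1}` (with `l` factors, indices mod `n`) in the free
group on `ZMod n`. -/
def wWord (n l : ℕ) (i : ZMod n) : FreeGroup (ZMod n) :=
  ((List.range l).map fun j => FreeGroup.of (i + (j : ZMod n))).prod

/-- The relations of the toric reflection group `W(k,n,m)`: `xᵢ^k = 1` for all `i`, and all
the `m`-factor products `x_i x_{i+1} ⋯ x_{i+m-1}` (indices mod `n`) are equal. -/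
def wRels (k n m : ℕ) : Set (FreeGroup (ZMod n)) :=
  (Set.range fun i : ZMod n => FreeGroup.of i ^ k) ∪
  (Set.range fun i : ZMod n => wWord n m 1 * (wWord n m i)⁻¹)

/-- The toric reflection group `W(k,n,m)`. -/
abbrev TorGroup (k n m : ℕ) := PresentedGroup (wRels k n m)

/-- The generator `xᵢ` of `W(k,n,m)`, for `i : ZMod n`. -/
def tx (k n m : ℕ) (i : ZMod n) : TorGroup k n m := PresentedGroup.of i

/-- The product `x_i x_{i+1} ⋯ x_{i+l-1}` (with `l` factors, indices mod `n`) in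
`W(k,n,m)`. -/
def txProd (k n m : ℕ) (l : ℕ) (i : ZMod n) : TorGroup k n m :=
  ((List.range l).map fun j => tx k n m (i + (j : ZMod n))).prod

lemma map_wWord (k n m l : ℕ) (i : ZMod n) :
    QuotientGroup.mk' (Subgroup.normalClosure (wRels k n m)) (wWord n l i)
      = txProd k n m l i := by
  unfold wWord txProd
  rw [map_list_prod, List.map_map]
  rfl

lemma window (k n m : ℕ) (i : ZMod n) :
    txProd k n m m i = txProd k n m m 1 := by
  have hmem : wWord n m 1 * (wWord n m i)⁻¹ ∈
      Subgroup.normalClosure (wRels k n m) :=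
    Subgroup.subset_normalClosure (Or.inr ⟨i, rfl⟩)
  have h1 : QuotientGroup.mk' (Subgroup.normalClosure (wRels k n m))
      (wWord n m 1 * (wWord n m i)⁻¹) = 1 := by
    rwa [QuotientGroup.mk'_apply, QuotientGroup.eq_one_iff]
  rw [map_mul, map_inv, mul_inv_eq_one, map_wWord, map_wWord] at h1
  exact h1.symm

lemma txProd_succ (k n m l : ℕ) (i : ZMod n) :
    txProd k n m (l + 1) i = txProd k n m l i * tx k n m (i + l) := by
  simp [txProd, List.range_succ]

lemma txProd_add (k n m a b : ℕ) (i : ZMod n) :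
    txProd k n m (a + b) i = txProd k n m a i * txProd k n m b (i + a) := by
  induction b with
  | zero => simp [txProd]
  | succ b ih =>
      rw [← Nat.add_assoc, txProd_succ, ih, txProd_succ, mul_assoc]
      congr 2
      push_cast
      ring

lemma txProd_n_pow (k n m j : ℕ) :
    txProd k n m (n * j) 1 = txProd k n m n 1 ^ j := by
  induction j with
  | zero => simp [txProd]
  | succ j ih =>
      rw [Nat.mul_succ, txProd_add, ih, pow_succ]
      congr 2
      simp

lemma txProd_m_pow (k n m j : ℕ) :
    txProd k n m (m * j) 1 = txProd k n m m 1 ^ j := by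
  induction j with
  | zero => simp [txProd]
  | succ j ih =>
      rw [Nat.mul_succ, txProd_add, ih, pow_succ,
        window k n m (1 + ((m * j : ℕ) : ZMod n))]

/-- In the toric reflection group `W(k,n,m)`, the elements `(x₁x₂⋯xₙ)^m` and
`(x₁x₂⋯x_m)^n` are equal (indices mod `n`). -/
theorem stmt10 (k n m : ℕ) (hk : 2 ≤ k) (hn : 2 ≤ n) (hm : 2 ≤ m)
    (hco : Nat.Coprime n m) :
    txProd k n m n 1 ^ m = txProd k n m m 1 ^ n := by
  rw [← txProd_n_pow, ← txProd_m_pow, Nat.mul_comm]
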